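/- Let F be a binary relation on a set Pri and ⊑_F the relaxed flow preorder on security levels (subsets of Pri). Then: (1) l₁ ∪ l₂ is a greatest lower bound of l₁ and l₂ with respect to ⊑_F; (2) ↑F(l₁) ∩ ↑F(l₂) is a least upper bound of l₁ and l₂ with respect to ⊑_F; (3) ∅ is a greatest element (l ⊑_F ∅ for all l); (4) Pri is a least element (Pri ⊑_F l for all l). -/
import Mathlib

/-- The `F`-upward closure of a security level `ℓ`. -/
def upclo {α : Type*} (F : α → α → Prop) (ℓ : Set α) : Set α :=
  {q | ∃ p ∈ ℓ, Relation.ReflTransGen F p q}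

/-- The relaxed flow relation `l₁ ⊑_F l₂`. -/
def flowLe {α : Type*} (F : α → α → Prop) (l₁ l₂ : Set α) : Prop :=
  ∀ q ∈ l₂, ∃ p ∈ l₁, Relation.ReflTransGen F p q

/-- in the preorder `⊑_F`, union of levels is a greatest lower bound,
intersection of upward closures is a least upper bound, `∅` is a greatest element,
and `Pri` is a least element. -/
theorem stmt_10 {α : Type*} (F : α → α → Prop) :
    (∀ l₁ l₂ : Set α,
      flowLe F (l₁ ∪ l₂) l₁ ∧ flowLe F (l₁ ∪ l₂) l₂ ∧
      (∀ g : Set α, flowLe F g l₁ → flowLe F g l₂ → flowLe F g (l₁ ∪ l₂))) ∧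
    (∀ l₁ l₂ : Set α,
      flowLe F l₁ (upclo F l₁ ∩ upclo F l₂) ∧ flowLe F l₂ (upclo F l₁ ∩ upclo F l₂) ∧
      (∀ g : Set α, flowLe F l₁ g → flowLe F l₂ g → flowLe F (upclo F l₁ ∩ upclo F l₂) g)) ∧
    (∀ l : Set α, flowLe F l ∅) ∧
    (∀ l : Set α, flowLe F Set.univ l) := by
  refine ⟨fun l₁ l₂ => ⟨?_, ?_, ?_⟩, fun l₁ l₂ => ⟨?_, ?_, ?_⟩, ?_, ?_⟩
  · exact fun q hq => ⟨q, Or.inl hq, Relation.ReflTransGen.refl⟩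
  · exact fun q hq => ⟨q, Or.inr hq, Relation.ReflTransGen.refl⟩
  · rintro g h₁ h₂ q (hq | hq)
    · exact h₁ q hq
    · exact h₂ q hq
  · rintro q ⟨⟨p, hp, hpq⟩, _⟩; exact ⟨p, hp, hpq⟩
  · rintro q ⟨_, ⟨p, hp, hpq⟩⟩; exact ⟨p, hp, hpq⟩
  · intro g h₁ h₂ q hq
    obtain ⟨p₁, hp₁, h₁q⟩ := h₁ q hq
    obtain ⟨p₂, hp₂, h₂q⟩ := h₂ q hq
    exact ⟨q, ⟨⟨p₁, hp₁, h₁q⟩, ⟨p₂, hp₂, h₂q⟩⟩, Relation.ReflTransGen.refl⟩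
  · intro l q hq; exact absurd hq (Set.notMem_empty q)
  · exact fun l q _ => ⟨q, trivial, Relation.ReflTransGen.refl⟩
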